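/- Let λ=(λ₁≥⋯≥λ_ℓ>0) be a partition, b=(b₁,…,b_ℓ) a vector of positive integers, and T∈SSYT(λ,b). Then the fiber {U∈SetSSYT(λ,b) : sup(U)=T} consists exactly of the set-valued fillings U with T(i,j) ∈ U(i,j) ⊆ sat(T)(i,j) for every box (i,j) of λ; in particular this fiber has exactly 2^{depth(T)} elements. -/

import Mathlib

open scoped Classical

noncomputable section

namespace DriftKL

/-- `(i,j)` is a box of the Young diagram of `lam` (French notation, rows indexed
bottom-to-top, everything 1-indexed). -/
def InShape (lam : ℕ → ℕ) (i j : ℕ) : Prop := 1 ≤ i ∧ 1 ≤ j ∧ j ≤ lam i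

/-- `lam` encodes a partition `λ₁ ≥ ⋯ ≥ λ_ℓ > 0` (1-indexed; `0` outside `[1,ℓ]`). -/
def IsPartitionFun (ℓ : ℕ) (lam : ℕ → ℕ) : Prop :=
  (∀ i, 1 ≤ i → i ≤ ℓ → 1 ≤ lam i) ∧
  (∀ i j, 1 ≤ i → i ≤ j → j ≤ ℓ → lam j ≤ lam i) ∧
  (∀ i, i = 0 ∨ ℓ < i → lam i = 0)

/-- The Finset of boxes of the Young diagram of `lam`. -/
def shapeBoxes (ℓ : ℕ) (lam : ℕ → ℕ) : Finset (ℕ × ℕ) :=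
  (Finset.Icc 1 ℓ ×ˢ Finset.Icc 1 (lam 1)).filter (fun p => p.2 ≤ lam p.1)

/-- Semistandardness: positive entries, rows weakly increase left-to-right,
columns strictly increase bottom-to-top. -/
def IsSSYT (lam : ℕ → ℕ) (T : ℕ → ℕ → ℕ) : Prop :=
  (∀ i j, InShape lam i j → 1 ≤ T i j) ∧
  (∀ i j, InShape lam i j → InShape lam i (j+1) → T i j ≤ T i (j+1)) ∧
  (∀ i j, InShape lam i j → InShape lam (i+1) j → T i j < T (i+1) j)

/-- Flagged semistandard Young tableaux of shape `lam`, flagged by `b`,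
represented as functions vanishing off the shape. -/
def SSYTset (lam b : ℕ → ℕ) : Set (ℕ → ℕ → ℕ) :=
  {T | IsSSYT lam T ∧ (∀ i j, InShape lam i j → T i j ≤ b i) ∧
       (∀ i j, ¬ InShape lam i j → T i j = 0)}

/-- Boundary convention: `T(i,0) = 1` for `i > 0`, and `T(0,j) = 0`. -/
def TxC (T : ℕ → ℕ → ℕ) (i j : ℕ) : ℕ :=
  if i = 0 then 0 else if j = 0 then 1 else T i j

/-- The saturation `sat(T)`: `sat(T)(i,j) = [max{T(i,j-1), 1+T(i-1,j)}, T(i,j)]`. -/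
def satF (lam : ℕ → ℕ) (T : ℕ → ℕ → ℕ) (i j : ℕ) : Finset ℕ :=
  if InShape lam i j then
    Finset.Icc (max (TxC T i (j - 1)) (TxC T (i - 1) j + 1)) (T i j)
  else ∅

/-- `depth(T) = |sat(T)| - |λ|`. -/
def depthT (ℓ : ℕ) (lam : ℕ → ℕ) (T : ℕ → ℕ → ℕ) : ℕ :=
  (∑ p ∈ shapeBoxes ℓ lam, (satF lam T p.1 p.2).card) - (shapeBoxes ℓ lam).card

/-- Flagged set-valued semistandard fillings: each box carries a nonempty finite
set of positive integers bounded by the flag, such that every choice of one entry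
per box is semistandard.  Off the shape the value is `∅`. -/
def SetSSYTset (lam b : ℕ → ℕ) : Set (ℕ → ℕ → Finset ℕ) :=
  {U | (∀ i j, InShape lam i j → (U i j).Nonempty) ∧
       (∀ i j, ¬ InShape lam i j → U i j = ∅) ∧
       (∀ i j, InShape lam i j → ∀ x ∈ U i j, 1 ≤ x ∧ x ≤ b i) ∧
       (∀ T : ℕ → ℕ → ℕ, (∀ i j, InShape lam i j → T i j ∈ U i j) →
          (∀ i j, InShape lam i j → InShape lam i (j+1) → T i j ≤ T i (j+1)) ∧
          (∀ i j, InShape lam i j → InShape lam (i+1) j → T i j < T (i+1) j))}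

/-- `ex(U) = |U| - |λ|`. -/
def exU (ℓ : ℕ) (lam : ℕ → ℕ) (U : ℕ → ℕ → Finset ℕ) : ℕ :=
  (∑ p ∈ shapeBoxes ℓ lam, (U p.1 p.2).card) - (shapeBoxes ℓ lam).card

/-- `sup(U)(i,j) = max U(i,j)` (as a function vanishing off the shape). -/
def supF (lam : ℕ → ℕ) (U : ℕ → ℕ → Finset ℕ) (i j : ℕ) : ℕ :=
  if InShape lam i j then (U i j).sup id else 0

/-- Boundary convention for set-valued fillings: `max U(i,0) = 1` for `i > 0`
and `max U(0,j) = 0`. -/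
def UxC (U : ℕ → ℕ → Finset ℕ) (i j : ℕ) : ℕ :=
  if i = 0 then 0 else if j = 0 then 1 else (U i j).sup id

/-- The lower saturated set-valued fillings: each `U(i,j)` is the full interval
`[max{max U(i,j-1), 1 + max U(i-1,j)}, max U(i,j)]`. -/
def LowerSet (lam b : ℕ → ℕ) : Set (ℕ → ℕ → Finset ℕ) :=
  {U | U ∈ SetSSYTset lam b ∧ ∀ i j, InShape lam i j →
      U i j = Finset.Icc (max (UxC U i (j - 1)) (UxC U (i - 1) j + 1)) ((U i j).sup id)}


section Aux

variable {ℓ : ℕ} {lam b : ℕ → ℕ} {T : ℕ → ℕ → ℕ}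

lemma sup_mem_of_nonempty {s : Finset ℕ} (h : s.Nonempty) : s.sup id ∈ s := by
  have := s.max'_mem h
  rwa [Finset.max'_eq_sup', Finset.sup'_eq_sup] at this

lemma inShape_le_ell (hlam : IsPartitionFun ℓ lam) {i j : ℕ} (h : InShape lam i j) :
    i ≤ ℓ := by
  by_contra hc
  have h0 := hlam.2.2 i (Or.inr (lt_of_not_ge hc))
  obtain ⟨h1, h2, h3⟩ := h
  omega

lemma mem_shapeBoxes (hlam : IsPartitionFun ℓ lam) (p : ℕ × ℕ) :
    p ∈ shapeBoxes ℓ lam ↔ InShape lam p.1 p.2 := by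
  simp only [shapeBoxes, Finset.mem_filter, Finset.mem_product, Finset.mem_Icc, InShape]
  constructor
  · rintro ⟨⟨⟨h1, h2⟩, h3, h4⟩, h5⟩
    exact ⟨h1, h3, h5⟩
  · rintro ⟨h1, h3, h5⟩
    have hle : p.1 ≤ ℓ := inShape_le_ell hlam ⟨h1, h3, h5⟩
    have hmono : lam p.1 ≤ lam 1 := hlam.2.1 1 p.1 le_rfl h1 hle
    exact ⟨⟨⟨h1, hle⟩, h3, le_trans h5 hmono⟩, h5⟩

lemma shape_left (hlam : IsPartitionFun ℓ lam) {i j : ℕ} (h : InShape lam i j)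
    (hj : 2 ≤ j) : InShape lam i (j - 1) := by
  obtain ⟨h1, h2, h3⟩ := h
  exact ⟨h1, by omega, by omega⟩

lemma shape_down (hlam : IsPartitionFun ℓ lam) {i j : ℕ} (h : InShape lam i j)
    (hi : 2 ≤ i) : InShape lam (i - 1) j := by
  obtain ⟨h1, h2, h3⟩ := h
  have hle : i ≤ ℓ := inShape_le_ell hlam ⟨h1, h2, h3⟩
  have hmono : lam i ≤ lam (i - 1) := hlam.2.1 (i - 1) i (by omega) (by omega) hle
  exact ⟨by omega, h2, by omega⟩

lemma sat_lb (hlam : IsPartitionFun ℓ lam) (hT : T ∈ SSYTset lam b) {i j : ℕ}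
    (h : InShape lam i j) :
    max (TxC T i (j - 1)) (TxC T (i - 1) j + 1) ≤ T i j := by
  obtain ⟨⟨hpos, hrow, hcol⟩, hflag, hoff⟩ := hT
  have hi1 : 1 ≤ i := h.1
  have hj1 : 1 ≤ j := h.2.1
  apply max_le
  · rcases Nat.lt_or_ge j 2 with hj | hj
    · have : j = 1 := by omega
      subst this
      simp only [TxC, Nat.sub_self, if_neg (by omega : ¬ i = 0), if_pos rfl]
      exact hpos i 1 h
    · have hsh : InShape lam i (j - 1) := shape_left hlam h hj
      have := hrow i (j - 1) hsh (by rwa [Nat.sub_add_cancel hj1])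
      rw [Nat.sub_add_cancel hj1] at this
      rw [TxC, if_neg (by omega : ¬ i = 0), if_neg (by omega : ¬ j - 1 = 0)]
      exact this
  · rcases Nat.lt_or_ge i 2 with hi | hi
    · have : i = 1 := by omega
      subst this
      simp only [TxC, Nat.sub_self, if_pos rfl]
      exact hpos 1 j h
    · have hsh : InShape lam (i - 1) j := shape_down hlam h hi
      have := hcol (i - 1) j hsh (by rwa [Nat.sub_add_cancel hi1])
      rw [Nat.sub_add_cancel hi1] at this
      simp only [TxC, if_neg (by omega : ¬ i - 1 = 0), if_neg (by omega : ¬ j = 0)]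
      omega

lemma T_mem_sat (hlam : IsPartitionFun ℓ lam) (hT : T ∈ SSYTset lam b) {i j : ℕ}
    (h : InShape lam i j) : T i j ∈ satF lam T i j := by
  rw [satF, if_pos h, Finset.mem_Icc]
  exact ⟨sat_lb hlam hT h, le_rfl⟩

end Aux

/-- For `T ∈ SSYT(λ,b)`, the fiber of `sup` over `T` consists
exactly of those set-valued fillings `U` with `T(i,j) ∈ U(i,j) ⊆ sat(T)(i,j)` at
every box, and it has exactly `2^{depth(T)}` elements. -/
theorem statement4 (ℓ : ℕ) (lam b : ℕ → ℕ)
    (hlam : IsPartitionFun ℓ lam)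
    (hb : ∀ i, 1 ≤ i → i ≤ ℓ → 1 ≤ b i)
    (T : ℕ → ℕ → ℕ) (hT : T ∈ SSYTset lam b) :
    {U | U ∈ SetSSYTset lam b ∧ supF lam U = T} =
      {U : ℕ → ℕ → Finset ℕ |
        (∀ i j, InShape lam i j → T i j ∈ U i j ∧ U i j ⊆ satF lam T i j) ∧
        (∀ i j, ¬ InShape lam i j → U i j = ∅)} ∧
    ({U | U ∈ SetSSYTset lam b ∧ supF lam U = T}).ncard = 2 ^ depthT ℓ lam T := by
  have hEq : {U | U ∈ SetSSYTset lam b ∧ supF lam U = T} =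
      {U : ℕ → ℕ → Finset ℕ |
        (∀ i j, InShape lam i j → T i j ∈ U i j ∧ U i j ⊆ satF lam T i j) ∧
        (∀ i j, ¬ InShape lam i j → U i j = ∅)} := by
    ext U
    simp only [Set.mem_setOf_eq]
    constructor
    · rintro ⟨⟨hne, hoff, hbnd, hsel⟩, hsup⟩
      refine ⟨fun i j hij => ?_, hoff⟩
      have hTU : ∀ i' j', InShape lam i' j' → T i' j' ∈ U i' j' := by
        intro i' j' h'
        rw [← hsup]
        simp only [supF, if_pos h']
        exact sup_mem_of_nonempty (hne i' j' h')
      refine ⟨hTU i j hij, fun x hx => ?_⟩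
      rw [satF, if_pos hij, Finset.mem_Icc]
      have hub : x ≤ T i j := by
        rw [← hsup]
        simp only [supF, if_pos hij]
        exact Finset.le_sup (f := id) hx
      have hi1 : 1 ≤ i := hij.1
      have hj1 : 1 ≤ j := hij.2.1
      have hx1 : 1 ≤ x := (hbnd i j hij x hx).1
      set T0 : ℕ → ℕ → ℕ := fun i' j' => if i' = i ∧ j' = j then x else T i' j' with hT0def
      have hsel0 : ∀ i' j', InShape lam i' j' → T0 i' j' ∈ U i' j' := by
        intro i' j' h'
        by_cases hc : i' = i ∧ j' = j
        · simp only [hT0def, if_pos hc]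
          rw [hc.1, hc.2]
          exact hx
        · simp only [hT0def, if_neg hc]
          exact hTU i' j' h'
      have hrc := hsel T0 hsel0
      have hT0x : T0 i j = x := by simp [hT0def]
      refine ⟨max_le ?_ ?_, hub⟩
      · rcases Nat.lt_or_ge j 2 with hj | hj
        · have hje : j = 1 := by omega
          subst hje
          simp only [TxC, Nat.sub_self, if_neg (by omega : ¬ i = 0), if_pos rfl]
          exact hx1
        · have hsh : InShape lam i (j - 1) := shape_left hlam hij hj
          have h1 := hrc.1 i (j - 1) hsh (by rwa [Nat.sub_add_cancel hj1])
          rw [Nat.sub_add_cancel hj1, hT0x] at h1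
          have e1 : T0 i (j - 1) = T i (j - 1) := by
            simp only [hT0def]
            split
            · omega
            · rfl
          rw [e1] at h1
          rw [TxC, if_neg (by omega : ¬ i = 0), if_neg (by omega : ¬ j - 1 = 0)]
          exact h1
      · rcases Nat.lt_or_ge i 2 with hi | hi
        · have hie : i = 1 := by omega
          subst hie
          have h0 : TxC T 0 j = 0 := by simp [TxC]
          rw [Nat.sub_self, h0]
          omega
        · have hsh : InShape lam (i - 1) j := shape_down hlam hij hi
          have h1 := hrc.2 (i - 1) j hsh (by rwa [Nat.sub_add_cancel hi1])
          rw [Nat.sub_add_cancel hi1, hT0x] at h1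
          have e1 : T0 (i - 1) j = T (i - 1) j := by
            simp only [hT0def]
            split
            · omega
            · rfl
          rw [e1] at h1
          rw [TxC, if_neg (by omega : ¬ i - 1 = 0), if_neg (by omega : ¬ j = 0)]
          omega
    · rintro ⟨hin, hoff⟩
      have hsub : ∀ i j, InShape lam i j → U i j ⊆
          Finset.Icc (max (TxC T i (j - 1)) (TxC T (i - 1) j + 1)) (T i j) := by
        intro i j h
        have := (hin i j h).2
        rwa [satF, if_pos h] at this
      have hsupU : ∀ i j, InShape lam i j → (U i j).sup id = T i j := by
        intro i j h
        apply le_antisymm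
        · exact Finset.sup_le fun x hx => (Finset.mem_Icc.mp (hsub i j h hx)).2
        · exact Finset.le_sup (f := id) (hin i j h).1
      refine ⟨⟨fun i j h => ⟨T i j, (hin i j h).1⟩, hoff, ?_, ?_⟩, ?_⟩
      · intro i j h x hx
        have hm := Finset.mem_Icc.mp (hsub i j h hx)
        have h1 : TxC T (i - 1) j + 1 ≤ x := le_trans (le_max_right _ _) hm.1
        have h2 : x ≤ b i := le_trans hm.2 (hT.2.1 i j h)
        exact ⟨by omega, h2⟩
      · intro T' hT'
        constructor
        · intro i j h h'
          have hm := Finset.mem_Icc.mp (hsub i j h (hT' i j h))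
          have hm' := Finset.mem_Icc.mp (hsub i (j + 1) h' (hT' i (j + 1) h'))
          have hlow : TxC T i j ≤ T' i (j + 1) := by
            have := le_trans (le_max_left _ _) hm'.1
            simpa using this
          rw [TxC, if_neg (by have := h.1; omega : ¬ i = 0),
            if_neg (by have := h.2.1; omega : ¬ j = 0)] at hlow
          exact le_trans hm.2 hlow
        · intro i j h h'
          have hm := Finset.mem_Icc.mp (hsub i j h (hT' i j h))
          have hm' := Finset.mem_Icc.mp (hsub (i + 1) j h' (hT' (i + 1) j h'))
          have hlow : TxC T i j + 1 ≤ T' (i + 1) j := by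
            have := le_trans (le_max_right _ _) hm'.1
            simpa using this
          rw [TxC, if_neg (by have := h.1; omega : ¬ i = 0),
            if_neg (by have := h.2.1; omega : ¬ j = 0)] at hlow
          omega
      · funext i j
        by_cases h : InShape lam i j
        · rw [supF, if_pos h]
          exact hsupU i j h
        · rw [supF, if_neg h, (hT.2.2 i j h)]
  refine ⟨hEq, ?_⟩
  rw [hEq]
  set B := shapeBoxes ℓ lam with hB
  set F : Finset ((p : ℕ × ℕ) → p ∈ B → Finset ℕ) :=
    B.pi (fun p => ((satF lam T p.1 p.2).erase (T p.1 p.2)).powerset) with hF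
  set Φ : ((p : ℕ × ℕ) → p ∈ B → Finset ℕ) → (ℕ → ℕ → Finset ℕ) :=
    fun f i j => if h : (i, j) ∈ B then insert (T i j) (f (i, j) h) else ∅ with hΦ
  have hmem : ∀ i j : ℕ, (i, j) ∈ B ↔ InShape lam i j := fun i j =>
    mem_shapeBoxes hlam (i, j)
  have himg : {U : ℕ → ℕ → Finset ℕ |
        (∀ i j, InShape lam i j → T i j ∈ U i j ∧ U i j ⊆ satF lam T i j) ∧
        (∀ i j, ¬ InShape lam i j → U i j = ∅)} = Φ '' ↑F := by
    ext U
    simp only [Set.mem_setOf_eq, Set.mem_image, Finset.mem_coe]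
    constructor
    · rintro ⟨hin, hoff⟩
      refine ⟨fun p _ => (U p.1 p.2).erase (T p.1 p.2), ?_, ?_⟩
      · rw [Finset.mem_pi]
        intro p hp
        rw [Finset.mem_powerset]
        exact Finset.erase_subset_erase _ (hin p.1 p.2 ((mem_shapeBoxes hlam p).mp hp)).2
      · funext i j
        simp only [hΦ]
        by_cases h : (i, j) ∈ B
        · rw [dif_pos h]
          exact Finset.insert_erase (hin i j ((hmem i j).mp h)).1
        · rw [dif_neg h]
          exact (hoff i j (fun hc => h ((hmem i j).mpr hc))).symm
    · rintro ⟨f, hf, rfl⟩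
      rw [Finset.mem_pi] at hf
      constructor
      · intro i j h
        have hij : (i, j) ∈ B := (hmem i j).mpr h
        simp only [hΦ, dif_pos hij]
        refine ⟨Finset.mem_insert_self _ _, ?_⟩
        apply Finset.insert_subset (T_mem_sat hlam hT h)
        exact (Finset.mem_powerset.mp (hf (i, j) hij)).trans (Finset.erase_subset _ _)
      · intro i j h
        simp only [hΦ, dif_neg (fun hc => h ((hmem i j).mp hc))]
  have hinj : Set.InjOn Φ ↑F := by
    intro f hf g hg hfg
    rw [Finset.mem_coe, Finset.mem_pi] at hf hg
    funext p hp
    have hnf : T p.1 p.2 ∉ f p hp := fun hc =>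
      Finset.notMem_erase _ _ (Finset.mem_powerset.mp (hf p hp) hc)
    have hng : T p.1 p.2 ∉ g p hp := fun hc =>
      Finset.notMem_erase _ _ (Finset.mem_powerset.mp (hg p hp) hc)
    have hkey : insert (T p.1 p.2) (f p hp) = insert (T p.1 p.2) (g p hp) := by
      have := congrFun (congrFun hfg p.1) p.2
      simpa only [hΦ, dif_pos (show ((p.1, p.2) : ℕ × ℕ) ∈ B from hp)] using this
    calc f p hp = (insert (T p.1 p.2) (f p hp)).erase (T p.1 p.2) :=
          (Finset.erase_insert hnf).symm
      _ = (insert (T p.1 p.2) (g p hp)).erase (T p.1 p.2) := by rw [hkey]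
      _ = g p hp := Finset.erase_insert hng
  rw [himg, Set.ncard_image_of_injOn hinj, Set.ncard_coe_finset]
  have hcard : F.card = ∏ p ∈ B, 2 ^ ((satF lam T p.1 p.2).card - 1) := by
    rw [hF, Finset.card_pi]
    refine Finset.prod_congr rfl fun p hp => ?_
    rw [Finset.card_powerset,
      Finset.card_erase_of_mem (T_mem_sat hlam hT ((mem_shapeBoxes hlam p).mp hp))]
  have hpos : ∀ p ∈ B, 1 ≤ (satF lam T p.1 p.2).card := fun p hp =>
    Finset.card_pos.mpr ⟨T p.1 p.2, T_mem_sat hlam hT ((mem_shapeBoxes hlam p).mp hp)⟩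
  have hsum : ∑ p ∈ B, (satF lam T p.1 p.2).card =
      ∑ p ∈ B, ((satF lam T p.1 p.2).card - 1) + B.card := by
    calc ∑ p ∈ B, (satF lam T p.1 p.2).card
        = ∑ p ∈ B, (((satF lam T p.1 p.2).card - 1) + 1) :=
          Finset.sum_congr rfl fun p hp => by have := hpos p hp; omega
      _ = ∑ p ∈ B, ((satF lam T p.1 p.2).card - 1) + ∑ _p ∈ B, 1 :=
          Finset.sum_add_distrib
      _ = ∑ p ∈ B, ((satF lam T p.1 p.2).card - 1) + B.card := by
          rw [Finset.sum_const, smul_eq_mul, mul_one]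
  have hdepth : depthT ℓ lam T = ∑ p ∈ B, ((satF lam T p.1 p.2).card - 1) := by
    rw [depthT, ← hB]
    omega
  rw [hcard, hdepth, ← Finset.prod_pow_eq_pow_sum]

end DriftKL
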